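/- Backpropagation of Batch Norm is a scaled orthogonal projection: Fix N ≥ 1 and constants c₁, c₀ ∈ ℝ. In the Euclidean space ℝ^N with standard inner product, let 𝟙 be the all-ones vector, and for f ∈ ℝ^N define μ(f) = (1/N) Σ_i f_i, σ(f) = ‖f − μ(f)𝟙‖₂ / √N, and BN(f) = c₁ (f − μ(f)𝟙)/σ(f) + c₀𝟙. Then for every f that is not a scalar multiple of 𝟙 (equivalently σ(f) > 0), BN is Fréchet differentiable at f, and its derivative equals (c₁/σ(f)) · Q, where Q is the orthogonal projection of ℝ^N onto the orthogonal complement of the subspace spanned by f and 𝟙. -/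

import Mathlib

open Finset
open scoped RealInnerProductSpace

/-- The all-ones vector in `ℝ^N`. -/
noncomputable def ones (N : ℕ) : EuclideanSpace ℝ (Fin N) := WithLp.toLp 2 (fun _ => 1)

/-- Batch mean `μ(f) = (1/N) Σ_i f_i`. -/
noncomputable def bnMean (N : ℕ) (f : EuclideanSpace ℝ (Fin N)) : ℝ :=
  (∑ i, f i) / N

/-- Batch standard deviation `σ(f) = ‖f − μ(f)𝟙‖₂ / √N`. -/
noncomputable def bnSigma (N : ℕ) (f : EuclideanSpace ℝ (Fin N)) : ℝ :=
  ‖f - bnMean N f • ones N‖ / Real.sqrt N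

/-- The Batch Normalization map `BN(f) = c₁ (f − μ(f)𝟙)/σ(f) + c₀𝟙`. -/
noncomputable def BN (N : ℕ) (c₁ c₀ : ℝ) (f : EuclideanSpace ℝ (Fin N)) :
    EuclideanSpace ℝ (Fin N) :=
  c₁ • (bnSigma N f)⁻¹ • (f - bnMean N f • ones N) + c₀ • ones N

theorem ones_apply (N : ℕ) (i : Fin N) : ones N i = 1 := rfl

theorem inner_ones (N : ℕ) (v : EuclideanSpace ℝ (Fin N)) : ⟪ones N, v⟫ = ∑ i, v i := by
  simp [ones_apply, PiLp.inner_apply, RCLike.inner_apply]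

/-- The (continuous linear) centering map `v ↦ v − μ(v)𝟙`. -/
noncomputable def centerCLM (N : ℕ) :
    EuclideanSpace ℝ (Fin N) →L[ℝ] EuclideanSpace ℝ (Fin N) :=
  ContinuousLinearMap.id ℝ _ - (N:ℝ)⁻¹ • (innerSL ℝ (ones N)).smulRight (ones N)

theorem centerCLM_apply (N : ℕ) (v : EuclideanSpace ℝ (Fin N)) :
    centerCLM N v = v - bnMean N v • ones N := by
  rw [bnMean]
  simp [centerCLM, ContinuousLinearMap.smul_apply, ones_apply, smul_smul, div_eq_inv_mul,
    PiLp.inner_apply, RCLike.inner_apply]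

theorem bn_fderiv_is_scaled_projection (N : ℕ) (hN : 1 ≤ N) (c₁ c₀ : ℝ)
    (f : EuclideanSpace ℝ (Fin N)) (hσ : 0 < bnSigma N f) :
    HasFDerivAt (BN N c₁ c₀)
      ((c₁ / bnSigma N f) •
        (((Submodule.span ℝ {f, ones N})ᗮ).subtypeL.comp
          (Submodule.orthogonalProjectionOnto (Submodule.span ℝ {f, ones N})ᗮ))) f := by
  have hN0 : (0:ℝ) < N := by exact_mod_cast hN
  have hNne : (N:ℝ) ≠ 0 := ne_of_gt hN0
  have hsN : 0 < Real.sqrt N := Real.sqrt_pos.2 hN0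
  have hsNne : Real.sqrt N ≠ 0 := ne_of_gt hsN
  set g : EuclideanSpace ℝ (Fin N) := f - bnMean N f • ones N with hgdef
  have hσg : bnSigma N f = ‖g‖ / Real.sqrt N := rfl
  have hgpos : 0 < ‖g‖ := by
    rcases (norm_nonneg g).lt_or_eq with h | h
    · exact h
    · exfalso; rw [hσg, ← h] at hσ; simp at hσ
  have hgne : ‖g‖ ≠ 0 := ne_of_gt hgpos
  have hsq : Real.sqrt (‖g‖ ^ 2) = ‖g‖ := Real.sqrt_sq hgpos.le
  -- inner product facts
  have hmean : ∀ v : EuclideanSpace ℝ (Fin N), bnMean N v = ⟪ones N, v⟫ / N := by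
    intro v; rw [inner_ones, bnMean]
  have hOO : ⟪ones N, ones N⟫ = (N:ℝ) := by rw [inner_ones]; simp [ones_apply]
  have hof : ⟪ones N, f⟫ = bnMean N f * N := by
    rw [inner_ones, bnMean]; field_simp
  have hgo : ⟪g, ones N⟫ = 0 := by
    rw [hgdef, inner_sub_left, real_inner_smul_left, hOO,
      real_inner_comm (ones N) f, hof, sub_self]
  have hog : ⟪ones N, g⟫ = 0 := by rw [real_inner_comm, hgo]
  have hgg : ⟪g, g⟫ = ‖g‖ ^ 2 := real_inner_self_eq_norm_sq g
  have hfv : ∀ v : EuclideanSpace ℝ (Fin N),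
      ⟪f, v⟫ = ⟪g, v⟫ + bnMean N f * ⟪ones N, v⟫ := by
    intro v
    have hf' : f = g + bnMean N f • ones N := by rw [hgdef]; abel
    conv_lhs => rw [hf']
    rw [inner_add_left, real_inner_smul_left]
  -- the centering map applied at f
  have hAx : ∀ v, centerCLM N v = v - bnMean N v • ones N := centerCLM_apply N
  have hAf : centerCLM N f = g := by rw [hAx, hgdef]
  -- derivative computation
  have hA : HasFDerivAt (fun x => centerCLM N x) (centerCLM N) f :=
    (centerCLM N).hasFDerivAt
  have hq : HasFDerivAt (fun x => ‖centerCLM N x‖ ^ 2)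
      (2 • (innerSL ℝ g).comp (centerCLM N)) f := by
    simpa [hAf] using hA.norm_sq
  have h1 : HasDerivAt Real.sqrt (1 / (2 * ‖g‖)) (‖g‖ ^ 2) := by
    have := Real.hasDerivAt_sqrt (x := ‖g‖ ^ 2) (by positivity)
    rwa [hsq] at this
  have h2 : HasDerivAt (fun t => (Real.sqrt t)⁻¹)
      (-(1 / (2 * ‖g‖)) / ‖g‖ ^ 2) (‖g‖ ^ 2) := by
    have := h1.inv (by rw [hsq]; positivity)
    rwa [hsq] at this
  have hφ : HasFDerivAt (fun x => ‖centerCLM N x‖⁻¹)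
      ((-(1 / (2 * ‖g‖)) / ‖g‖ ^ 2) • (2 • (innerSL ℝ g).comp (centerCLM N))) f := by
    have h3 := h2.comp_hasFDerivAt_of_eq f hq (by rw [hAf])
    have heq : ((fun t => (Real.sqrt t)⁻¹) ∘ fun x => ‖centerCLM N x‖ ^ 2)
        = fun x => ‖centerCLM N x‖⁻¹ := by
      funext x; simp [Function.comp, Real.sqrt_sq (norm_nonneg _)]
    rwa [heq] at h3
  have hmain : HasFDerivAt
      (fun x => ‖centerCLM N x‖⁻¹ • centerCLM N x)
      ((‖g‖)⁻¹ • (centerCLM N : EuclideanSpace ℝ (Fin N) →L[ℝ] EuclideanSpace ℝ (Fin N)) +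
        ((-(1 / (2 * ‖g‖)) / ‖g‖ ^ 2) •
          (2 • (innerSL ℝ g).comp (centerCLM N))).smulRight g) f := by
    have := hφ.smul hA
    rw [hAf] at this
    exact this
  have hBN0 := (hmain.const_smul (c₁ * Real.sqrt N)).add_const (c₀ • ones N)
  have hfun : BN N c₁ c₀ =
      fun x => (c₁ * Real.sqrt N) • (‖centerCLM N x‖⁻¹ • centerCLM N x) + c₀ • ones N := by
    funext x
    rw [BN, hAx, bnSigma, inv_div, smul_smul, smul_smul, div_eq_mul_inv]
    ring_nf
  rw [hfun]
  refine hBN0.congr_fderiv ?_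
  -- projection formula
  have hproj : ∀ v : EuclideanSpace ℝ (Fin N),
      (↑(Submodule.orthogonalProjectionOnto (Submodule.span ℝ {f, ones N})ᗮ v) :
        EuclideanSpace ℝ (Fin N))
      = v - (⟪g, v⟫ / ‖g‖ ^ 2) • g - (⟪ones N, v⟫ / N) • ones N := by
    intro v
    have hKf : f ∈ Submodule.span ℝ {f, ones N} := Submodule.subset_span (by simp)
    have hKo : ones N ∈ Submodule.span ℝ {f, ones N} := Submodule.subset_span (by simp)
    have hKg : g ∈ Submodule.span ℝ {f, ones N} := by
      rw [hgdef]; exact Submodule.sub_mem _ hKf (Submodule.smul_mem _ _ hKo)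
    set z : EuclideanSpace ℝ (Fin N) :=
      v - ((⟪g, v⟫ / ‖g‖ ^ 2) • g + (⟪ones N, v⟫ / N) • ones N) with hz
    have hzf : ⟪z, f⟫ = 0 := by
      rw [hz, inner_sub_left, inner_add_left, real_inner_smul_left, real_inner_smul_left,
        real_inner_comm f v, real_inner_comm f g, real_inner_comm f (ones N),
        hfv v, hfv g, hfv (ones N), hgg, hog, hgo, hOO]
      field_simp
      ring
    have hzo : ⟪z, ones N⟫ = 0 := by
      rw [hz, inner_sub_left, inner_add_left, real_inner_smul_left, real_inner_smul_left,
        real_inner_comm (ones N) v, hgo, hOO]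
      field_simp
      ring
    have hsub : Submodule.span ℝ {f, ones N} ≤ (ℝ ∙ z)ᗮ := by
      rw [Submodule.span_le]
      rintro x hx
      simp only [Set.mem_insert_iff, Set.mem_singleton_iff] at hx
      rcases hx with rfl | rfl
      · exact Submodule.mem_orthogonal_singleton_iff_inner_right.2 hzf
      · exact Submodule.mem_orthogonal_singleton_iff_inner_right.2 hzo
    have key : (↑(Submodule.orthogonalProjectionOnto (Submodule.span ℝ {f, ones N}) v) :
        EuclideanSpace ℝ (Fin N))
        = (⟪g, v⟫ / ‖g‖ ^ 2) • g + (⟪ones N, v⟫ / N) • ones N := by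
      rw [← Submodule.starProjection_apply]
      apply Submodule.eq_starProjection_of_mem_of_inner_eq_zero
      · exact Submodule.add_mem _ (Submodule.smul_mem _ _ hKg) (Submodule.smul_mem _ _ hKo)
      · intro w hw
        exact Submodule.mem_orthogonal_singleton_iff_inner_right.1 (hsub hw)
    rw [← Submodule.starProjection_apply, Submodule.starProjection_orthogonal_val,
      Submodule.starProjection_apply, key]
    abel
  refine ContinuousLinearMap.ext fun v => ?_
  have hgAv : ⟪g, centerCLM N v⟫ = ⟪g, v⟫ := by
    rw [hAx, inner_sub_right, real_inner_smul_right, hgo, mul_zero, sub_zero]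
  simp only [ContinuousLinearMap.smul_apply, ContinuousLinearMap.add_apply,
    ContinuousLinearMap.coe_smul', Pi.smul_apply, ContinuousLinearMap.smulRight_apply,
    ContinuousLinearMap.coe_comp', Function.comp_apply, Submodule.coe_subtypeL',
    Submodule.coe_subtype, innerSL_apply_apply]
  rw [hproj v, hgAv, hAx v, hmean v, hσg]
  match_scalars
  · field_simp
  · field_simp
    have h3 : ‖g‖ ^ 3 * ‖g‖⁻¹ ^ 3 = 1 := by rw [← mul_pow, mul_inv_cancel₀ hgne, one_pow]
    linear_combination (c₁ * N * ⟪g, v⟫ * bnMean N f) * h3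
  · field_simp
    have h3 : ‖g‖ ^ 3 * ‖g‖⁻¹ ^ 3 = 1 := by rw [← mul_pow, mul_inv_cancel₀ hgne, one_pow]
    linear_combination (-(c₁ * ⟪g, v⟫)) * h3
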